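/- Let (c_n)_{n≥1} be a sequence with values in [0,1] satisfying the recursive bound c(i+q+r) ≤ c(i)·c(r) + ρ_q·√(c(i)·c(r)) for all i,q,r ∈ ℕ, where ρ_q ∈ [0,1]. Suppose there exists N₀ with ρ_{N₀} + c(N₀) ≤ 4^{-p} for a given p ∈ ℕ. Then for M_k := (2^k − 1)N₀ one has c(M_k) ≤ 4^{-(k-1)p}·c(N₀) for all k ≥ 1. -/
import Mathlib


theorem stmt_6 (c ρ : ℕ → ℝ)
    (hc0 : ∀ n, 0 ≤ c n) (hc1 : ∀ n, c n ≤ 1)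
    (hρ0 : ∀ n, 0 ≤ ρ n) (hρ1 : ∀ n, ρ n ≤ 1)
    (hrec : ∀ i q r : ℕ, 1 ≤ i → 1 ≤ q → 1 ≤ r →
      c (i + q + r) ≤ c i * c r + ρ q * Real.sqrt (c i * c r))
    (p N₀ : ℕ) (hN₀ : 1 ≤ N₀)
    (hsmall : ρ N₀ + c N₀ ≤ ((4 : ℝ))⁻¹ ^ p) :
    ∀ k : ℕ, 1 ≤ k → c ((2 ^ k - 1) * N₀) ≤ ((4 : ℝ))⁻¹ ^ ((k - 1) * p) * c N₀ := by
  intro k hk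
  induction k, hk using Nat.le_induction with
  | base =>
    simp [hN₀]
  | succ k hk ih =>
    set M := (2 ^ k - 1) * N₀ with hM
    have h2k : 1 ≤ 2 ^ k - 1 := by
      have : 2 ≤ 2 ^ k := by
        calc 2 = 2 ^ 1 := rfl
        _ ≤ 2 ^ k := Nat.pow_le_pow_right (by norm_num) hk
      omega
    have hM1 : 1 ≤ M := Nat.one_le_iff_ne_zero.mpr (by positivity)
    have heq : (2 ^ (k + 1) - 1) * N₀ = M + N₀ + M := by
      have : 2 ^ (k + 1) = 2 * 2 ^ k := by ring
      rw [hM]; rw [show 2 ^ (k+1) - 1 = (2^k - 1) + 1 + (2^k - 1) by omega]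
      ring
    have hrec' := hrec M N₀ M hM1 hN₀ hM1
    rw [heq]
    have hsq : Real.sqrt (c M * c M) = c M := by
      rw [Real.sqrt_mul_self (hc0 M)]
    rw [hsq] at hrec'
    have hpow1 : ((4 : ℝ))⁻¹ ^ ((k - 1) * p) ≤ 1 :=
      pow_le_one₀ (by norm_num) (by norm_num)
    have hcM : c M ≤ ((4 : ℝ))⁻¹ ^ ((k - 1) * p) * c N₀ := ih
    have hcMle : c M ≤ c N₀ := hcM.trans (by nlinarith [hc0 N₀])
    have key : c (M + N₀ + M) ≤ (c M + ρ N₀) * c M := by nlinarith [hc0 M]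
    have h1 : c M + ρ N₀ ≤ ((4 : ℝ))⁻¹ ^ p := by linarith
    calc c (M + N₀ + M) ≤ (c M + ρ N₀) * c M := key
      _ ≤ ((4 : ℝ))⁻¹ ^ p * (((4 : ℝ))⁻¹ ^ ((k - 1) * p) * c N₀) := by
          apply mul_le_mul h1 hcM (hc0 M) (by positivity)
      _ = ((4 : ℝ))⁻¹ ^ ((k + 1 - 1) * p) * c N₀ := by
          rw [← mul_assoc, ← pow_add]
          congr 2
          have h : k + 1 - 1 = (k - 1) + 1 := by omega
          rw [h]; ring
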